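/- For every integer r ≥ 0 and every x ≥ 0, the r-th moment of the Szász–Mirakyan–Laguerre–Durrmeyer operator has the closed form μ_r^{(α,β)}(x) = (1/(n−β)^r) · Σ_{k=0}^∞ (α+1+k)_r · ψ_{n,k}(x), where (a)_r = a(a+1)⋯(a+r−1) is the Pochhammer (rising factorial) symbol. -/

import Mathlib

open MeasureTheory Real Filter

/-- The Szász–Mirakyan basis functions `ψ_{n,k}(x) = e^{-nx} (nx)^k / k!`. -/
noncomputable def psi (n k : ℕ) (x : ℝ) : ℝ :=
  Real.exp (-(n * x)) * (n * x) ^ k / (Nat.factorial k)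

/-- The Szász–Mirakyan–Laguerre–Durrmeyer operator `M_n^{(α,β)}`. -/
noncomputable def M (α β : ℝ) (n : ℕ) (f : ℝ → ℝ) (x : ℝ) : ℝ :=
  ∑' k : ℕ, (((n : ℝ) - β) ^ ((k : ℝ) + α + 1) / Real.Gamma ((k : ℝ) + α + 1)) *
    (∫ t in Set.Ioi (0 : ℝ), f t * t ^ ((k : ℝ) + α) * Real.exp (-((n : ℝ) - β) * t)) *
    psi n k x

/-- The `r`-th moment `μ_r^{(α,β)}(x) = M_n^{(α,β)}[t ↦ t^r](x)`. -/
noncomputable def mu (α β : ℝ) (n : ℕ) (r : ℕ) (x : ℝ) : ℝ :=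
  M α β n (fun t => t ^ r) x

lemma gamma_asc (r : ℕ) (x : ℝ) (hx : 0 < x) :
    Real.Gamma (x + r) = (ascPochhammer ℝ r).eval x * Real.Gamma x := by
  induction r with
  | zero => simp
  | succ m ih =>
    have : x + (m + 1 : ℕ) = (x + m) + 1 := by push_cast; ring
    rw [this, Real.Gamma_add_one (by positivity), ih, ascPochhammer_succ_right]
    simp [Polynomial.eval_mul]
    ring

/-- Closed form of the `r`-th moment as a Poisson-weighted series of rising factorials. -/
theorem stmt_0 (α β : ℝ) (hα : -1 < α) (n : ℕ) (hn : β < n) (r : ℕ) (x : ℝ) (hx : 0 ≤ x) :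
    mu α β n r x =
      (1 / ((n : ℝ) - β) ^ r) *
        ∑' k : ℕ, (ascPochhammer ℝ r).eval (α + 1 + (k : ℝ)) * psi n k x := by
  have hnb : 0 < (n : ℝ) - β := sub_pos.mpr hn
  rw [mu, M, ← tsum_mul_left]
  refine tsum_congr fun k => ?_
  have hck : (0:ℝ) ≤ (k:ℝ) := Nat.cast_nonneg k
  have hcr : (0:ℝ) ≤ (r:ℝ) := Nat.cast_nonneg r
  have hk1 : 0 < (k : ℝ) + α + 1 := by linarith
  have hkr : 0 < (k : ℝ) + α + (r : ℝ) + 1 := by linarith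
  have hint : (∫ t in Set.Ioi (0 : ℝ),
      (fun t : ℝ => t ^ r) t * t ^ ((k : ℝ) + α) * Real.exp (-((n : ℝ) - β) * t)) =
      (1 / ((n : ℝ) - β)) ^ ((k : ℝ) + α + (r : ℝ) + 1) * Real.Gamma ((k : ℝ) + α + (r : ℝ) + 1) := by
    rw [← integral_rpow_mul_exp_neg_mul_Ioi hkr hnb]
    refine setIntegral_congr_fun measurableSet_Ioi fun t ht => ?_
    have ht0 : (0 : ℝ) < t := ht
    rw [show (k : ℝ) + α + (r : ℝ) + 1 - 1 = ((k : ℝ) + α) + (r : ℝ) by ring,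
      Real.rpow_add ht0 _ (r:ℝ), Real.rpow_natCast, neg_mul]
    ring
  rw [hint]
  have hGamma : Real.Gamma ((k : ℝ) + α + (r : ℝ) + 1) =
      (ascPochhammer ℝ r).eval ((k : ℝ) + α + 1) * Real.Gamma ((k : ℝ) + α + 1) := by
    rw [show (k : ℝ) + α + (r : ℝ) + 1 = ((k : ℝ) + α + 1) + (r : ℕ) by push_cast; ring]
    exact gamma_asc r _ hk1
  rw [hGamma]
  have hpow : ((n : ℝ) - β) ^ ((k : ℝ) + α + 1) * (1 / ((n : ℝ) - β)) ^ ((k : ℝ) + α + (r : ℝ) + 1)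
      = 1 / ((n : ℝ) - β) ^ r := by
    rw [one_div ((n : ℝ) - β), ← Real.rpow_neg_one ((n : ℝ) - β), ← Real.rpow_mul hnb.le,
      ← Real.rpow_add hnb, one_div, ← Real.rpow_natCast ((n : ℝ) - β) r,
      ← Real.rpow_neg hnb.le]
    congr 1
    ring
  have hGne : Real.Gamma ((k : ℝ) + α + 1) ≠ 0 := (Real.Gamma_pos_of_pos hk1).ne'
  have heval : (ascPochhammer ℝ r).eval (α + 1 + (k : ℝ)) =
      (ascPochhammer ℝ r).eval ((k : ℝ) + α + 1) := by ring_nf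
  rw [heval, ← hpow]
  field_simp
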